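/- G₂(q) := Σ_{n≥0} q^{7n²+6n}(1-q^{2n+1}) Σ_{|j|≤n} (-1)^j q^{-j²} satisfies G₂(q) = f_{12,16,12}(q^{12}, q^{12}, q) + q^{13} f_{12,16,12}(q^{26}, q^{26}, q), where f_{a,b,c}(x,y,q) = (Σ_{r,s≥0} - Σ_{r,s<0}) (-1)^{r+s} x^r y^s q^{ar(r-1)/2+brs+cs(s-1)/2}. -/

import Mathlib

open scoped BigOperators

/-- Finite q-Pochhammer symbol `(a;q)_n`. -/
noncomputable def qPoch (a q : ℂ) (n : ℕ) : ℂ := ∏ k ∈ Finset.range n, (1 - a * q ^ k)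

/-- Infinite q-Pochhammer symbol `(a;q)_∞`. -/
noncomputable def qPochInf (a q : ℂ) : ℂ := ∏' k : ℕ, (1 - a * q ^ k)

/-- q-Pochhammer symbol with integer index: `(a;q)_m`, where for negative `m`
`(a;q)_{-k} = 1/∏_{j=1}^{k}(1 - a q^{-j})`. -/
noncomputable def qPochZ (a q : ℂ) (m : ℤ) : ℂ :=
  if 0 ≤ m then qPoch a q m.toNat
  else 1 / ∏ k ∈ Finset.range (-m).toNat, (1 - a * q ^ (-(k : ℤ) - 1))

/-- `(α, β)` is a Bailey pair relative to `a` in base `q`. -/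
def IsBaileyPair (q a : ℂ) (α β : ℕ → ℂ) : Prop :=
  ∀ n : ℕ, β n = ∑ j ∈ Finset.range (n + 1),
    α j / (qPoch q q (n - j) * qPoch (a * q) q (n + j))

/-- The Andrews–Hickerson Bailey pair `α*_n(a,b,c,q)` (Lemma 2.1). -/
noncomputable def alphaStar (a b c q : ℂ) (n : ℕ) : ℂ :=
  q ^ (n ^ 2) * (b * c) ^ n * (1 - a * q ^ (2 * n)) * qPoch (a / b) q n * qPoch (a / c) q n /
      ((1 - a) * qPoch (b * q) q n * qPoch (c * q) q n) *
    ∑ j ∈ Finset.range (n + 1),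
      (-1 : ℂ) ^ j * (1 - a * q ^ (2 * (j : ℤ) - 1)) * qPochZ a q ((j : ℤ) - 1) *
          qPoch b q j * qPoch c q j /
        (q ^ (j * (j - 1) / 2) * (b * c) ^ j * qPoch q q j * qPoch (a / b) q j *
          qPoch (a / c) q j)

/-- Hecke-type double sum `f_{a,b,c}(x,y,q)`: the sum over `r,s ≥ 0` minus the sum
over `r,s < 0` of `(-1)^{r+s} x^r y^s q^{ar(r-1)/2+brs+cs(s-1)/2}`. -/
noncomputable def heckeF (a b c : ℤ) (x y q : ℂ) : ℂ :=
  (∑' p : ℕ × ℕ, (-1 : ℂ) ^ (p.1 + p.2) * x ^ p.1 * y ^ p.2 *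
      q ^ (a * ((p.1 : ℤ) * ((p.1 : ℤ) - 1) / 2) + b * p.1 * p.2 +
        c * ((p.2 : ℤ) * ((p.2 : ℤ) - 1) / 2))) -
  (∑' p : ℕ × ℕ, (-1 : ℂ) ^ ((-(p.1 : ℤ) - 1) + (-(p.2 : ℤ) - 1)) *
      x ^ (-(p.1 : ℤ) - 1) * y ^ (-(p.2 : ℤ) - 1) *
      q ^ (a * ((-(p.1 : ℤ) - 1) * ((-(p.1 : ℤ) - 1) - 1) / 2) +
        b * (-(p.1 : ℤ) - 1) * (-(p.2 : ℤ) - 1) +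
        c * ((-(p.2 : ℤ) - 1) * ((-(p.2 : ℤ) - 1) - 1) / 2)))

/-! ### Auxiliary definitions for the proof -/

/-- Positive-part summand of `heckeF`. -/
noncomputable def hpos (a b c : ℤ) (x y q : ℂ) (p : ℕ × ℕ) : ℂ :=
  (-1 : ℂ) ^ (p.1 + p.2) * x ^ p.1 * y ^ p.2 *
      q ^ (a * ((p.1 : ℤ) * ((p.1 : ℤ) - 1) / 2) + b * p.1 * p.2 +
        c * ((p.2 : ℤ) * ((p.2 : ℤ) - 1) / 2))

/-- Negative-part summand of `heckeF`. -/
noncomputable def hneg (a b c : ℤ) (x y q : ℂ) (p : ℕ × ℕ) : ℂ :=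
  (-1 : ℂ) ^ ((-(p.1 : ℤ) - 1) + (-(p.2 : ℤ) - 1)) *
      x ^ (-(p.1 : ℤ) - 1) * y ^ (-(p.2 : ℤ) - 1) *
      q ^ (a * ((-(p.1 : ℤ) - 1) * ((-(p.1 : ℤ) - 1) - 1) / 2) +
        b * (-(p.1 : ℤ) - 1) * (-(p.2 : ℤ) - 1) +
        c * ((-(p.2 : ℤ) - 1) * ((-(p.2 : ℤ) - 1) - 1) / 2))

lemma heckeF_eq (a b c : ℤ) (x y q : ℂ) :
    heckeF a b c x y q = (∑' p, hpos a b c x y q p) - ∑' p, hneg a b c x y q p := rfl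

/-- Full cone function on `ℕ × ℤ`. -/
noncomputable def coneG (q : ℂ) (b e : ℤ) (n : ℕ) (j : ℤ) : ℂ :=
  if -(n : ℤ) ≤ j ∧ j ≤ (n : ℤ) then
    (-1 : ℂ) ^ j * q ^ (7 * (n : ℤ) ^ 2 + b * n + e - j ^ 2) else 0

/-- Parity-restricted cone function on `ℕ × ℤ`. -/
noncomputable def coneGP (q : ℂ) (b e t : ℤ) (n : ℕ) (j : ℤ) : ℂ :=
  if (-(n : ℤ) ≤ j ∧ j ≤ (n : ℤ)) ∧ ((n : ℤ) + j) % 2 = t then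
    (-1 : ℂ) ^ j * q ^ (7 * (n : ℤ) ^ 2 + b * n + e - j ^ 2) else 0

lemma coneG_split (q : ℂ) (b e : ℤ) (n : ℕ) (j : ℤ) :
    coneG q b e n j = coneGP q b e 0 n j + coneGP q b e 1 n j := by
  unfold coneG coneGP
  by_cases hA : -(n : ℤ) ≤ j ∧ j ≤ (n : ℤ)
  · rcases Int.emod_two_eq ((n : ℤ) + j) with h | h
    · rw [if_pos hA, if_pos ⟨hA, h⟩, if_neg (fun hc => absurd hc.2 (by omega)), add_zero]
    · rw [if_pos hA, if_neg (fun hc => absurd hc.2 (by omega)), if_pos ⟨hA, h⟩, zero_add]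
  · rw [if_neg hA, if_neg (fun hc => hA hc.1), if_neg (fun hc => hA hc.1), add_zero]

def emb1 (p : ℕ × ℕ) : ℕ × ℤ := (p.1 + p.2, (p.1 : ℤ) - p.2)
def emb2 (p : ℕ × ℕ) : ℕ × ℤ := (p.1 + p.2 + 1, (p.1 : ℤ) - p.2)

lemma emb1_inj : Function.Injective emb1 := by
  rintro ⟨a, b⟩ ⟨c, d⟩ h
  simp only [emb1, Prod.mk.injEq] at h
  have : a = c ∧ b = d := by omega
  simp [Prod.ext_iff, this.1, this.2]

lemma emb2_inj : Function.Injective emb2 := by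
  rintro ⟨a, b⟩ ⟨c, d⟩ h
  simp only [emb2, Prod.mk.injEq] at h
  have : a = c ∧ b = d := by omega
  simp [Prod.ext_iff, this.1, this.2]

lemma coneGP_support1 (q : ℂ) (b e : ℤ) (x : ℕ × ℤ)
    (hx : x ∉ Set.range emb1) : coneGP q b e 0 x.1 x.2 = 0 := by
  obtain ⟨n, j⟩ := x
  rw [coneGP, if_neg]
  rintro ⟨⟨h1, h2⟩, h3⟩
  exact hx ⟨((((n : ℤ) + j) / 2).toNat, (((n : ℤ) - j) / 2).toNat), by
    simp only [emb1, Prod.mk.injEq]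
    constructor <;> omega⟩

lemma coneGP_support2 (q : ℂ) (b e : ℤ) (x : ℕ × ℤ)
    (hx : x ∉ Set.range emb2) : coneGP q b e 1 x.1 x.2 = 0 := by
  obtain ⟨n, j⟩ := x
  rw [coneGP, if_neg]
  rintro ⟨⟨h1, h2⟩, h3⟩
  exact hx ⟨((((n : ℤ) + j - 1) / 2).toNat, (((n : ℤ) - j - 1) / 2).toNat), by
    simp only [emb2, Prod.mk.injEq]
    constructor <;> omega⟩

lemma coneGP_range1 (q : ℂ) (b e : ℤ) :
    Function.support (fun x : ℕ × ℤ => coneGP q b e 0 x.1 x.2) ⊆ Set.range emb1 :=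
  fun x hx => by by_contra h; exact hx (coneGP_support1 q b e x h)

lemma coneGP_range2 (q : ℂ) (b e : ℤ) :
    Function.support (fun x : ℕ × ℤ => coneGP q b e 1 x.1 x.2) ⊆ Set.range emb2 :=
  fun x hx => by by_contra h; exact hx (coneGP_support2 q b e x h)

/-- value of the parity cone function along `emb1`. -/
lemma coneGP_emb1 (q : ℂ) (b e : ℤ) (p : ℕ × ℕ) :
    coneGP q b e 0 (emb1 p).1 (emb1 p).2 =
      (-1 : ℂ) ^ ((p.1 : ℤ) - p.2) *
        q ^ (7 * ((p.1 : ℤ) + p.2) ^ 2 + b * ((p.1 : ℤ) + p.2) + e - ((p.1 : ℤ) - p.2) ^ 2) := by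
  obtain ⟨r, s⟩ := p
  simp only [emb1, coneGP]
  split_ifs with h
  · have he : 7 * ((r + s : ℕ) : ℤ) ^ 2 + b * ((r + s : ℕ) : ℤ) + e - ((r : ℤ) - s) ^ 2 =
        7 * ((r : ℤ) + s) ^ 2 + b * ((r : ℤ) + s) + e - ((r : ℤ) - s) ^ 2 := by
      push_cast; ring
    rw [he]; exact if_pos h
  · exfalso; apply h
    refine ⟨⟨?_, ?_⟩, ?_⟩ <;> (push_cast; omega)

lemma coneGP_emb2 (q : ℂ) (b e : ℤ) (p : ℕ × ℕ) :
    coneGP q b e 1 (emb2 p).1 (emb2 p).2 =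
      (-1 : ℂ) ^ ((p.1 : ℤ) - p.2) *
        q ^ (7 * ((p.1 : ℤ) + p.2 + 1) ^ 2 + b * ((p.1 : ℤ) + p.2 + 1) + e
          - ((p.1 : ℤ) - p.2) ^ 2) := by
  obtain ⟨r, s⟩ := p
  simp only [emb2, coneGP]
  split_ifs with h
  · have he : 7 * ((r + s + 1 : ℕ) : ℤ) ^ 2 + b * ((r + s + 1 : ℕ) : ℤ) + e - ((r : ℤ) - s) ^ 2 =
        7 * ((r : ℤ) + s + 1) ^ 2 + b * ((r : ℤ) + s + 1) + e - ((r : ℤ) - s) ^ 2 := by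
      push_cast; ring
    rw [he]; exact if_pos h
  · exfalso; apply h
    refine ⟨⟨?_, ?_⟩, ?_⟩ <;> (push_cast; omega)

/-! ### small arithmetic helpers -/

lemma neg_one_zpow_congr {m k : ℤ} (h : (m - k) % 2 = 0) :
    (-1 : ℂ) ^ m = (-1 : ℂ) ^ k := by
  have hne : (-1 : ℂ) ≠ 0 := by norm_num
  have hm : m = k + (m - k) := by ring
  have he : Even (m - k) := Int.even_iff.mpr h
  rw [hm, zpow_add₀ hne, he.neg_one_zpow, mul_one]

lemma sign_nat (r s : ℕ) : (-1 : ℂ) ^ (r + s) = (-1 : ℂ) ^ ((r : ℤ) - s) := by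
  rw [← zpow_natCast (-1 : ℂ) (r + s)]
  exact neg_one_zpow_congr (by push_cast; omega)

lemma sign_negpart (r s : ℕ) :
    (-1 : ℂ) ^ ((-(r : ℤ) - 1) + (-(s : ℤ) - 1)) = (-1 : ℂ) ^ ((r : ℤ) - s) :=
  neg_one_zpow_congr (by omega)

lemma div2_lemma (m : ℤ) : 12 * (m * (m - 1) / 2) = 6 * (m * (m - 1)) := by
  obtain ⟨k, hk⟩ := Int.even_mul_succ_self (m - 1)
  have h2 : m * (m - 1) = 2 * k := by linear_combination hk
  rw [h2, Int.mul_ediv_cancel_left _ two_ne_zero]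
  ring

lemma pow_nat_zpow (q : ℂ) (c m : ℕ) : (q ^ c) ^ m = q ^ ((c : ℤ) * m) := by
  rw [← pow_mul, ← zpow_natCast]
  norm_cast

lemma pow_int_zpow (q : ℂ) (c : ℕ) (m : ℤ) : (q ^ c) ^ m = q ^ ((c : ℤ) * m) := by
  rw [← zpow_natCast q c, ← zpow_mul]

lemma collect3 (q : ℂ) (hq0 : q ≠ 0) (S : ℂ) {a b c : ℤ} (h : a + b = c) :
    q ^ a * (S * q ^ b) = S * q ^ c := by
  subst h; rw [zpow_add₀ hq0]; ring

lemma collect4 (q : ℂ) (hq0 : q ≠ 0) (S : ℂ) {a b c d : ℤ} (h : a + b + c = d) :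
    S * q ^ a * q ^ b * q ^ c = S * q ^ d := by
  subst h; rw [zpow_add₀ hq0, zpow_add₀ hq0]; ring

lemma collect5 (q : ℂ) (hq0 : q ≠ 0) (S : ℂ) {a b c d e : ℤ} (h : a + b + c + d = e) :
    q ^ a * (S * q ^ b * q ^ c * q ^ d) = S * q ^ e := by
  subst h; rw [zpow_add₀ hq0, zpow_add₀ hq0, zpow_add₀ hq0]; ring

lemma norm_term (q : ℂ) (m E : ℤ) : ‖(-1 : ℂ) ^ m * q ^ E‖ = ‖q‖ ^ E := by
  rw [norm_mul, norm_zpow, norm_zpow, norm_neg, norm_one, one_zpow, one_mul]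

/-! ### term identification lemmas -/

lemma term1 (q : ℂ) (hq0 : q ≠ 0) (p : ℕ × ℕ) :
    (-1 : ℂ) ^ ((p.1 : ℤ) - p.2) *
        q ^ (7 * ((p.1 : ℤ) + p.2) ^ 2 + 6 * ((p.1 : ℤ) + p.2) + 0 - ((p.1 : ℤ) - p.2) ^ 2) =
      hpos 12 16 12 (q ^ 12) (q ^ 12) q p := by
  obtain ⟨r, s⟩ := p
  rw [hpos]
  rw [sign_nat, pow_nat_zpow q 12 r, pow_nat_zpow q 12 s, div2_lemma, div2_lemma]
  exact (collect4 q hq0 _ (by push_cast; ring)).symm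

lemma term2 (q : ℂ) (hq0 : q ≠ 0) (p : ℕ × ℕ) :
    (-1 : ℂ) ^ ((p.1 : ℤ) - p.2) *
        q ^ (7 * ((p.1 : ℤ) + p.2 + 1) ^ 2 + 6 * ((p.1 : ℤ) + p.2 + 1) + 0
          - ((p.1 : ℤ) - p.2) ^ 2) =
      q ^ 13 * hpos 12 16 12 (q ^ 26) (q ^ 26) q p := by
  obtain ⟨r, s⟩ := p
  rw [hpos]
  rw [sign_nat, pow_nat_zpow q 26 r, pow_nat_zpow q 26 s, div2_lemma, div2_lemma]
  rw [show (q : ℂ) ^ (13 : ℕ) = q ^ ((13 : ℤ)) from (zpow_natCast q 13).symm]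
  exact (collect5 q hq0 _ (by push_cast; ring)).symm

lemma term3 (q : ℂ) (hq0 : q ≠ 0) (p : ℕ × ℕ) :
    (-1 : ℂ) ^ ((p.1 : ℤ) - p.2) *
        q ^ (7 * ((p.1 : ℤ) + p.2) ^ 2 + 8 * ((p.1 : ℤ) + p.2) + 1 - ((p.1 : ℤ) - p.2) ^ 2) =
      q ^ 13 * hneg 12 16 12 (q ^ 26) (q ^ 26) q p := by
  obtain ⟨r, s⟩ := p
  rw [hneg]
  rw [sign_negpart, pow_int_zpow q 26, pow_int_zpow q 26, div2_lemma, div2_lemma]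
  rw [show (q : ℂ) ^ (13 : ℕ) = q ^ ((13 : ℤ)) from (zpow_natCast q 13).symm]
  exact (collect5 q hq0 _ (by push_cast; ring)).symm

lemma term4 (q : ℂ) (hq0 : q ≠ 0) (p : ℕ × ℕ) :
    (-1 : ℂ) ^ ((p.1 : ℤ) - p.2) *
        q ^ (7 * ((p.1 : ℤ) + p.2 + 1) ^ 2 + 8 * ((p.1 : ℤ) + p.2 + 1) + 1
          - ((p.1 : ℤ) - p.2) ^ 2) =
      hneg 12 16 12 (q ^ 12) (q ^ 12) q p := by
  obtain ⟨r, s⟩ := p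
  rw [hneg]
  rw [sign_negpart, pow_int_zpow q 12, pow_int_zpow q 12, div2_lemma, div2_lemma]
  exact (collect4 q hq0 _ (by push_cast; ring)).symm

/-! ### summability -/

lemma summable_aux {q : ℂ} (hq : ‖q‖ < 1) (hq0 : q ≠ 0) (f : ℕ × ℕ → ℂ) (E : ℕ × ℕ → ℤ)
    (hf : ∀ p, ‖f p‖ = ‖q‖ ^ (E p)) (hE : ∀ p, ((p.1 : ℤ) + p.2) ≤ E p) : Summable f := by
  have h0 : (0 : ℝ) < ‖q‖ := norm_pos_iff.mpr hq0
  apply Summable.of_norm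
  have hg : Summable (fun p : ℕ × ℕ => ‖q‖ ^ p.1 * ‖q‖ ^ p.2) :=
    (summable_geometric_of_lt_one (norm_nonneg q) hq).mul_of_nonneg
      (summable_geometric_of_lt_one (norm_nonneg q) hq)
      (fun n => by positivity) (fun n => by positivity)
  refine Summable.of_nonneg_of_le (fun p => norm_nonneg _) (fun p => ?_) hg
  rw [hf p]
  calc ‖q‖ ^ E p ≤ ‖q‖ ^ ((p.1 : ℤ) + p.2) :=
        zpow_le_zpow_right_of_le_one₀ h0 hq.le (hE p)
    _ = ‖q‖ ^ p.1 * ‖q‖ ^ p.2 := by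
        rw [← zpow_natCast ‖q‖ p.1, ← zpow_natCast ‖q‖ p.2, ← zpow_add₀ (ne_of_gt h0)]

/-- the inner sum over `ℤ` is the finite sum. -/
lemma coneG_inner_sum (q : ℂ) (b e : ℤ) (n : ℕ) :
    ∑' j : ℤ, coneG q b e n j =
      ∑ j ∈ Finset.Icc (-(n : ℤ)) (n : ℤ), (-1 : ℂ) ^ j * q ^ (7 * (n : ℤ) ^ 2 + b * n + e - j ^ 2) := by
  rw [tsum_eq_sum (s := Finset.Icc (-(n : ℤ)) (n : ℤ))
    (fun j hj => by rw [coneG, if_neg (fun hc => hj (Finset.mem_Icc.mpr ⟨hc.1, hc.2⟩))])]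
  exact Finset.sum_congr rfl fun j hj => by
    rw [coneG, if_pos (Finset.mem_Icc.mp hj)]

lemma lhs_term (q : ℂ) (hq0 : q ≠ 0) (n : ℕ) :
    q ^ (7 * n ^ 2 + 6 * n) * (1 - q ^ (2 * n + 1)) *
        ∑ j ∈ Finset.Icc (-(n : ℤ)) (n : ℤ), (-1 : ℂ) ^ j * q ^ (-j ^ 2) =
      (∑ j ∈ Finset.Icc (-(n : ℤ)) (n : ℤ),
          (-1 : ℂ) ^ j * q ^ (7 * (n : ℤ) ^ 2 + 6 * n + 0 - j ^ 2)) -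
        ∑ j ∈ Finset.Icc (-(n : ℤ)) (n : ℤ),
          (-1 : ℂ) ^ j * q ^ (7 * (n : ℤ) ^ 2 + 8 * n + 1 - j ^ 2) := by
  rw [mul_one_sub, sub_mul, Finset.mul_sum, Finset.mul_sum]
  congr 1
  · refine Finset.sum_congr rfl fun j hj => ?_
    rw [← zpow_natCast q (7 * n ^ 2 + 6 * n)]
    exact collect3 q hq0 _ (by push_cast; ring)
  · refine Finset.sum_congr rfl fun j hj => ?_
    rw [← pow_add, show 7 * n ^ 2 + 6 * n + (2 * n + 1) = 7 * n ^ 2 + 8 * n + 1 from by ring,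
      ← zpow_natCast q (7 * n ^ 2 + 8 * n + 1)]
    exact collect3 q hq0 _ (by push_cast; ring)

theorem stmt14 (q : ℂ) (hq : ‖q‖ < 1) (hq0 : q ≠ 0) :
    (∑' n : ℕ, q ^ (7 * n ^ 2 + 6 * n) * (1 - q ^ (2 * n + 1)) *
        ∑ j ∈ Finset.Icc (-(n : ℤ)) (n : ℤ), (-1 : ℂ) ^ j * q ^ (-j ^ 2)) =
      heckeF 12 16 12 (q ^ 12) (q ^ 12) q +
        q ^ 13 * heckeF 12 16 12 (q ^ 26) (q ^ 26) q := by
  have h0 : (0 : ℝ) < ‖q‖ := norm_pos_iff.mpr hq0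
  -- the four value functions
  set V1 : ℕ × ℕ → ℂ := fun p => (-1 : ℂ) ^ ((p.1 : ℤ) - p.2) *
    q ^ (7 * ((p.1 : ℤ) + p.2) ^ 2 + 6 * ((p.1 : ℤ) + p.2) + 0 - ((p.1 : ℤ) - p.2) ^ 2) with hV1
  set V2 : ℕ × ℕ → ℂ := fun p => (-1 : ℂ) ^ ((p.1 : ℤ) - p.2) *
    q ^ (7 * ((p.1 : ℤ) + p.2 + 1) ^ 2 + 6 * ((p.1 : ℤ) + p.2 + 1) + 0 - ((p.1 : ℤ) - p.2) ^ 2)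
    with hV2
  set V3 : ℕ × ℕ → ℂ := fun p => (-1 : ℂ) ^ ((p.1 : ℤ) - p.2) *
    q ^ (7 * ((p.1 : ℤ) + p.2) ^ 2 + 8 * ((p.1 : ℤ) + p.2) + 1 - ((p.1 : ℤ) - p.2) ^ 2) with hV3
  set V4 : ℕ × ℕ → ℂ := fun p => (-1 : ℂ) ^ ((p.1 : ℤ) - p.2) *
    q ^ (7 * ((p.1 : ℤ) + p.2 + 1) ^ 2 + 8 * ((p.1 : ℤ) + p.2 + 1) + 1 - ((p.1 : ℤ) - p.2) ^ 2)
    with hV4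
  -- summability of the value functions
  have sV1 : Summable V1 := by
    refine summable_aux hq hq0 _ (fun p =>
      7 * ((p.1 : ℤ) + p.2) ^ 2 + 6 * ((p.1 : ℤ) + p.2) + 0 - ((p.1 : ℤ) - p.2) ^ 2)
      (fun p => norm_term q _ _) (fun p => ?_)
    have hr : (0 : ℤ) ≤ p.1 := Int.natCast_nonneg _
    have hs : (0 : ℤ) ≤ p.2 := Int.natCast_nonneg _
    beta_reduce
    nlinarith [mul_nonneg hr hs, sq_nonneg ((p.1 : ℤ)), sq_nonneg ((p.2 : ℤ)), hr, hs,
      sq_nonneg ((p.1 : ℤ) + p.2), sq_nonneg ((p.1 : ℤ) - p.2)]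
  have sV2 : Summable V2 := by
    refine summable_aux hq hq0 _ (fun p =>
      7 * ((p.1 : ℤ) + p.2 + 1) ^ 2 + 6 * ((p.1 : ℤ) + p.2 + 1) + 0 - ((p.1 : ℤ) - p.2) ^ 2)
      (fun p => norm_term q _ _) (fun p => ?_)
    have hr : (0 : ℤ) ≤ p.1 := Int.natCast_nonneg _
    have hs : (0 : ℤ) ≤ p.2 := Int.natCast_nonneg _
    beta_reduce
    nlinarith [mul_nonneg hr hs, sq_nonneg ((p.1 : ℤ)), sq_nonneg ((p.2 : ℤ)), hr, hs,
      sq_nonneg ((p.1 : ℤ) + p.2), sq_nonneg ((p.1 : ℤ) - p.2)]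
  have sV3 : Summable V3 := by
    refine summable_aux hq hq0 _ (fun p =>
      7 * ((p.1 : ℤ) + p.2) ^ 2 + 8 * ((p.1 : ℤ) + p.2) + 1 - ((p.1 : ℤ) - p.2) ^ 2)
      (fun p => norm_term q _ _) (fun p => ?_)
    have hr : (0 : ℤ) ≤ p.1 := Int.natCast_nonneg _
    have hs : (0 : ℤ) ≤ p.2 := Int.natCast_nonneg _
    beta_reduce
    nlinarith [mul_nonneg hr hs, sq_nonneg ((p.1 : ℤ)), sq_nonneg ((p.2 : ℤ)), hr, hs,
      sq_nonneg ((p.1 : ℤ) + p.2), sq_nonneg ((p.1 : ℤ) - p.2)]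
  have sV4 : Summable V4 := by
    refine summable_aux hq hq0 _ (fun p =>
      7 * ((p.1 : ℤ) + p.2 + 1) ^ 2 + 8 * ((p.1 : ℤ) + p.2 + 1) + 1 - ((p.1 : ℤ) - p.2) ^ 2)
      (fun p => norm_term q _ _) (fun p => ?_)
    have hr : (0 : ℤ) ≤ p.1 := Int.natCast_nonneg _
    have hs : (0 : ℤ) ≤ p.2 := Int.natCast_nonneg _
    beta_reduce
    nlinarith [mul_nonneg hr hs, sq_nonneg ((p.1 : ℤ)), sq_nonneg ((p.2 : ℤ)), hr, hs,
      sq_nonneg ((p.1 : ℤ) + p.2), sq_nonneg ((p.1 : ℤ) - p.2)]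
  -- transport summability to the parity cone functions
  have sC1 : Summable (fun x : ℕ × ℤ => coneGP q 6 0 0 x.1 x.2) := by
    refine (emb1_inj.summable_iff (f := fun x : ℕ × ℤ => coneGP q 6 0 0 x.1 x.2)
      (fun x hx => coneGP_support1 q 6 0 x hx)).mp ?_
    exact (sV1.congr (fun p => (coneGP_emb1 q 6 0 p).symm) : _)
  have sC2 : Summable (fun x : ℕ × ℤ => coneGP q 6 0 1 x.1 x.2) := by
    refine (emb2_inj.summable_iff (f := fun x : ℕ × ℤ => coneGP q 6 0 1 x.1 x.2)
      (fun x hx => coneGP_support2 q 6 0 x hx)).mp ?_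
    exact (sV2.congr (fun p => (coneGP_emb2 q 6 0 p).symm) : _)
  have sC3 : Summable (fun x : ℕ × ℤ => coneGP q 8 1 0 x.1 x.2) := by
    refine (emb1_inj.summable_iff (f := fun x : ℕ × ℤ => coneGP q 8 1 0 x.1 x.2)
      (fun x hx => coneGP_support1 q 8 1 x hx)).mp ?_
    exact (sV3.congr (fun p => (coneGP_emb1 q 8 1 p).symm) : _)
  have sC4 : Summable (fun x : ℕ × ℤ => coneGP q 8 1 1 x.1 x.2) := by
    refine (emb2_inj.summable_iff (f := fun x : ℕ × ℤ => coneGP q 8 1 1 x.1 x.2)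
      (fun x hx => coneGP_support2 q 8 1 x hx)).mp ?_
    exact (sV4.congr (fun p => (coneGP_emb2 q 8 1 p).symm) : _)
  -- summability of the full cone functions
  have sG1 : Summable (fun x : ℕ × ℤ => coneG q 6 0 x.1 x.2) :=
    (sC1.add sC2).congr (fun x => (coneG_split q 6 0 x.1 x.2).symm)
  have sG2 : Summable (fun x : ℕ × ℤ => coneG q 8 1 x.1 x.2) :=
    (sC3.add sC4).congr (fun x => (coneG_split q 8 1 x.1 x.2).symm)
  -- tsums of the parity cone functions
  have tC1 : ∑' x : ℕ × ℤ, coneGP q 6 0 0 x.1 x.2 = ∑' p, hpos 12 16 12 (q ^ 12) (q ^ 12) q p := by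
    rw [← emb1_inj.tsum_eq (f := fun x : ℕ × ℤ => coneGP q 6 0 0 x.1 x.2)
      (coneGP_range1 q 6 0)]
    exact tsum_congr fun p => (coneGP_emb1 q 6 0 p).trans (term1 q hq0 p)
  have tC2 : ∑' x : ℕ × ℤ, coneGP q 6 0 1 x.1 x.2 =
      q ^ 13 * ∑' p, hpos 12 16 12 (q ^ 26) (q ^ 26) q p := by
    rw [← emb2_inj.tsum_eq (f := fun x : ℕ × ℤ => coneGP q 6 0 1 x.1 x.2)
      (coneGP_range2 q 6 0), ← tsum_mul_left]
    exact tsum_congr fun p => (coneGP_emb2 q 6 0 p).trans (term2 q hq0 p)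
  have tC3 : ∑' x : ℕ × ℤ, coneGP q 8 1 0 x.1 x.2 =
      q ^ 13 * ∑' p, hneg 12 16 12 (q ^ 26) (q ^ 26) q p := by
    rw [← emb1_inj.tsum_eq (f := fun x : ℕ × ℤ => coneGP q 8 1 0 x.1 x.2)
      (coneGP_range1 q 8 1), ← tsum_mul_left]
    exact tsum_congr fun p => (coneGP_emb1 q 8 1 p).trans (term3 q hq0 p)
  have tC4 : ∑' x : ℕ × ℤ, coneGP q 8 1 1 x.1 x.2 = ∑' p, hneg 12 16 12 (q ^ 12) (q ^ 12) q p := by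
    rw [← emb2_inj.tsum_eq (f := fun x : ℕ × ℤ => coneGP q 8 1 1 x.1 x.2)
      (coneGP_range2 q 8 1)]
    exact tsum_congr fun p => (coneGP_emb2 q 8 1 p).trans (term4 q hq0 p)
  -- tsums of the full cone functions
  have tG1 : ∑' x : ℕ × ℤ, coneG q 6 0 x.1 x.2 =
      (∑' p, hpos 12 16 12 (q ^ 12) (q ^ 12) q p) +
        q ^ 13 * ∑' p, hpos 12 16 12 (q ^ 26) (q ^ 26) q p := by
    rw [tsum_congr (fun x : ℕ × ℤ => coneG_split q 6 0 x.1 x.2), Summable.tsum_add sC1 sC2, tC1, tC2]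
  have tG2 : ∑' x : ℕ × ℤ, coneG q 8 1 x.1 x.2 =
      (q ^ 13 * ∑' p, hneg 12 16 12 (q ^ 26) (q ^ 26) q p) +
        ∑' p, hneg 12 16 12 (q ^ 12) (q ^ 12) q p := by
    rw [tsum_congr (fun x : ℕ × ℤ => coneG_split q 8 1 x.1 x.2), Summable.tsum_add sC3 sC4, tC3, tC4]
  -- fiberwise summability
  have fib : ∀ (b e : ℤ) (n : ℕ), Summable (fun j : ℤ => coneG q b e n j) := by
    intro b e n
    apply summable_of_ne_finset_zero (s := Finset.Icc (-(n : ℤ)) (n : ℤ))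
    intro j hj
    rw [coneG, if_neg (fun hc => hj (Finset.mem_Icc.mpr ⟨hc.1, hc.2⟩))]
  -- iterated sums
  have hs1 : HasSum (fun n : ℕ => ∑' j : ℤ, coneG q 6 0 n j)
      (∑' x : ℕ × ℤ, coneG q 6 0 x.1 x.2) :=
    HasSum.prod_fiberwise sG1.hasSum (fun n => (fib 6 0 n).hasSum)
  have hs2 : HasSum (fun n : ℕ => ∑' j : ℤ, coneG q 8 1 n j)
      (∑' x : ℕ × ℤ, coneG q 8 1 x.1 x.2) :=
    HasSum.prod_fiberwise sG2.hasSum (fun n => (fib 8 1 n).hasSum)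
  have it1 : ∑' x : ℕ × ℤ, coneG q 6 0 x.1 x.2 = ∑' n : ℕ, ∑' j : ℤ, coneG q 6 0 n j :=
    hs1.tsum_eq.symm
  have it2 : ∑' x : ℕ × ℤ, coneG q 8 1 x.1 x.2 = ∑' n : ℕ, ∑' j : ℤ, coneG q 8 1 n j :=
    hs2.tsum_eq.symm
  -- summability of the outer sums
  have sA : Summable (fun n : ℕ => ∑' j : ℤ, coneG q 6 0 n j) := hs1.summable
  have sB : Summable (fun n : ℕ => ∑' j : ℤ, coneG q 8 1 n j) := hs2.summable
  -- put everything together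
  calc
    (∑' n : ℕ, q ^ (7 * n ^ 2 + 6 * n) * (1 - q ^ (2 * n + 1)) *
        ∑ j ∈ Finset.Icc (-(n : ℤ)) (n : ℤ), (-1 : ℂ) ^ j * q ^ (-j ^ 2))
      = ∑' n : ℕ, ((∑' j : ℤ, coneG q 6 0 n j) - ∑' j : ℤ, coneG q 8 1 n j) := by
        refine tsum_congr fun n => ?_
        rw [lhs_term q hq0 n, coneG_inner_sum q 6 0 n, coneG_inner_sum q 8 1 n]
    _ = (∑' n : ℕ, ∑' j : ℤ, coneG q 6 0 n j) - ∑' n : ℕ, ∑' j : ℤ, coneG q 8 1 n j :=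
        Summable.tsum_sub sA sB
    _ = heckeF 12 16 12 (q ^ 12) (q ^ 12) q + q ^ 13 * heckeF 12 16 12 (q ^ 26) (q ^ 26) q := by
        rw [← it1, ← it2, tG1, tG2, heckeF_eq, heckeF_eq]
        ring
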